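/- Let a ∈ ℝ and let A < ∞ be such that the Hardy inequality over (−∞,a) holds with constant A, i.e. for every F ∈ 𝓕, ∫_{(−∞,a)} (F(x) − F(a))² dm(x) ≤ A · ∫_{(−∞,a)} (dF/dS)²(t) dS(t). Then B⁻ₐ ≤ A; equivalently, for every r < a, (S(a) − S(r))·m((−∞,r)) ≤ A. -/

import Mathlib

open MeasureTheory Set
open scoped ENNReal

/-- If the Hardy inequality over `(−∞,a)` holds with a (finite) constant `A`,
then `B⁻ₐ ≤ A`; equivalently, for every `r < a`, `(S(a) − S(r)) · m((−∞,r)) ≤ A`. -/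
theorem hardy_lower_bound_left
    (S : ℝ → ℝ) (hScont : Continuous S) (hSmono : StrictMono S)
    (hStop : Filter.Tendsto S Filter.atTop Filter.atTop)
    (hSbot : Filter.Tendsto S Filter.atBot Filter.atBot)
    (μS : Measure ℝ)
    (hμS : ∀ c d : ℝ, c ≤ d → μS (Ioc c d) = ENNReal.ofReal (S d - S c))
    (m : Measure ℝ) [IsFiniteMeasure m]
    (a : ℝ) (A : ℝ)
    (hHardy : ∀ F f : ℝ → ℝ, MemLp F 2 m → Integrable f μS → MemLp f 2 μS →
      (∀ c d : ℝ, c < d → F d - F c = ∫ t in Ioc c d, f t ∂μS) →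
      ∫⁻ x in Iio a, ENNReal.ofReal ((F x - F a) ^ 2) ∂m ≤
        ENNReal.ofReal A * ∫⁻ t in Iio a, ENNReal.ofReal (f t ^ 2) ∂μS) :
    (⨆ x ∈ Iic a, m (Iio x) * ENNReal.ofReal (S a - S x)) ≤ ENNReal.ofReal A ∧
      ∀ r : ℝ, r < a →
        ENNReal.ofReal (S a - S r) * m (Iio r) ≤ ENNReal.ofReal A := by
  have key : ∀ r : ℝ, r < a →
      ENNReal.ofReal (S a - S r) * m (Iio r) ≤ ENNReal.ofReal A := by
    intro r hr
    set c : ℝ := S a - S r with hcdef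
    have hc : 0 < c := sub_pos.2 (hSmono hr)
    set F : ℝ → ℝ := fun x => S ((x ⊓ a) ⊔ r) - S r with hFdef
    set f : ℝ → ℝ := (Ioc r a).indicator fun _ => 1 with hfdef
    have hμfin : μS (Ioc r a) = ENNReal.ofReal c := hμS r a hr.le
    -- F is bounded
    have hFbound : ∀ x : ℝ, 0 ≤ F x ∧ F x ≤ c := by
      intro x
      constructor
      · have : r ≤ (x ⊓ a) ⊔ r := le_sup_right
        simpa [hFdef] using sub_nonneg.2 (hSmono.monotone this)
      · have : (x ⊓ a) ⊔ r ≤ a := sup_le inf_le_right hr.le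
        exact sub_le_sub_right (hSmono.monotone this) _
    have hFcont : Continuous F :=
      (hScont.comp ((continuous_id.min continuous_const).max continuous_const)).sub
        continuous_const
    have hFmem : MemLp F 2 m := by
      refine MemLp.of_bound hFcont.aestronglyMeasurable c (ae_of_all _ ?_)
      intro x
      rw [Real.norm_eq_abs, abs_of_nonneg (hFbound x).1]
      exact (hFbound x).2
    have hfint : Integrable f μS := by
      rw [hfdef, integrable_indicator_iff measurableSet_Ioc]
      exact integrableOn_const (by rw [hμfin]; exact ENNReal.ofReal_ne_top)
    have hfmem : MemLp f 2 μS := by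
      refine memLp_indicator_const 2 measurableSet_Ioc 1 (Or.inr ?_)
      rw [hμfin]; exact ENNReal.ofReal_ne_top
    have hFTC : ∀ cc dd : ℝ, cc < dd → F dd - F cc = ∫ t in Ioc cc dd, f t ∂μS := by
      intro cc dd hcd
      have hint : ∫ t in Ioc cc dd, f t ∂μS = (μS (Ioc (cc ⊔ r) (dd ⊓ a))).toReal := by
        rw [hfdef, setIntegral_indicator measurableSet_Ioc, Ioc_inter_Ioc,
          setIntegral_const]
        simp
        rfl
      rw [hint]
      rcases le_or_gt (cc ⊔ r) (dd ⊓ a) with hle | hlt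
      · have hcca : cc ≤ a := le_trans (le_trans le_sup_left hle) inf_le_right
        have hr' : r ≤ dd ⊓ a := le_trans le_sup_right hle
        have h1 : (dd ⊓ a) ⊔ r = dd ⊓ a := sup_eq_left.2 hr'
        have h2 : (cc ⊓ a) ⊔ r = cc ⊔ r := by rw [inf_eq_left.2 hcca]
        rw [hμS _ _ hle, ENNReal.toReal_ofReal (sub_nonneg.2 (hSmono.monotone hle))]
        simp [hFdef, h1, h2]
      · have hempty : Ioc (cc ⊔ r) (dd ⊓ a) = ∅ := Ioc_eq_empty (not_lt.2 hlt.le)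
        rw [hempty]
        simp only [measure_empty, ENNReal.toReal_zero]
        rcases inf_lt_iff.1 hlt with h | h
        · rcases lt_sup_iff.1 h with h' | h'
          · exact absurd h' (not_lt.2 hcd.le)
          · have hdd : (dd ⊓ a) ⊔ r = r := sup_eq_right.2 (le_trans inf_le_left h'.le)
            have hcc : (cc ⊓ a) ⊔ r = r := sup_eq_right.2 (le_trans inf_le_left (hcd.trans h').le)
            simp [hFdef, hdd, hcc]
        · rcases lt_sup_iff.1 h with h' | h'
          · have hdd : dd ⊓ a = a := inf_eq_right.2 (h'.trans hcd).le
            have hcc : cc ⊓ a = a := inf_eq_right.2 h'.le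
            simp [hFdef, hdd, hcc]
          · exact absurd h' (not_lt.2 hr.le)
    have H := hHardy F f hFmem hfint hfmem hFTC
    -- lower bound the LHS
    have hFa : F a = c := by simp [hFdef, sup_eq_left.2 hr.le, hcdef]
    have hFx : ∀ x ∈ Iio r, ENNReal.ofReal ((F x - F a) ^ 2) = ENNReal.ofReal (c ^ 2) := by
      intro x hx
      have hxr : x < r := hx
      have h1 : x ⊓ a = x := inf_eq_left.2 (hxr.trans hr).le
      have h2 : x ⊔ r = r := sup_eq_right.2 hxr.le
      have : F x = 0 := by simp [hFdef, h1, h2]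
      rw [this, hFa]
      ring_nf
    have h1 : ENNReal.ofReal (c ^ 2) * m (Iio r) ≤
        ∫⁻ x in Iio a, ENNReal.ofReal ((F x - F a) ^ 2) ∂m := by
      calc ENNReal.ofReal (c ^ 2) * m (Iio r)
          = ∫⁻ x in Iio r, ENNReal.ofReal ((F x - F a) ^ 2) ∂m := by
            rw [setLIntegral_congr_fun measurableSet_Iio hFx,
              setLIntegral_const]
        _ ≤ _ := lintegral_mono_set (Iio_subset_Iio hr.le)
    -- upper bound the RHS
    have h2 : ∫⁻ t in Iio a, ENNReal.ofReal (f t ^ 2) ∂μS ≤ ENNReal.ofReal c := by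
      calc ∫⁻ t in Iio a, ENNReal.ofReal (f t ^ 2) ∂μS
          ≤ ∫⁻ t, ENNReal.ofReal (f t ^ 2) ∂μS := setLIntegral_le_lintegral _ _
        _ = μS (Ioc r a) := by
            have heq : ∀ t, ENNReal.ofReal (f t ^ 2) =
                (Ioc r a).indicator (1 : ℝ → ℝ≥0∞) t := by
              intro t
              by_cases ht : t ∈ Ioc r a <;> simp [hfdef, ht]
            simp_rw [heq]
            exact lintegral_indicator_one measurableSet_Ioc
        _ = ENNReal.ofReal c := hμfin
    have hmain : ENNReal.ofReal (c ^ 2) * m (Iio r) ≤ ENNReal.ofReal A * ENNReal.ofReal c :=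
      le_trans h1 (le_trans H (mul_le_mul_right h2 _))
    have hsq : ENNReal.ofReal (c ^ 2) = ENNReal.ofReal c * ENNReal.ofReal c := by
      rw [← ENNReal.ofReal_mul hc.le, sq]
    have hfin : ENNReal.ofReal c * (ENNReal.ofReal c * m (Iio r)) ≤
        ENNReal.ofReal c * ENNReal.ofReal A := by
      rw [← mul_assoc, ← hsq, mul_comm (ENNReal.ofReal c) (ENNReal.ofReal A)] at *
      exact hmain
    exact (ENNReal.mul_le_mul_iff_right (ne_of_gt (ENNReal.ofReal_pos.2 hc))
      ENNReal.ofReal_ne_top).1 hfin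
  refine ⟨?_, key⟩
  refine iSup₂_le fun x hx => ?_
  rcases eq_or_lt_of_le (mem_Iic.1 hx) with heq | hlt
  · subst heq
    simp
  · rw [mul_comm]
    exact key x hlt
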